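/- Let V = 𝔽₂⁹ with A = span{e₁,e₂,e₃}, B = span{e₄,e₅,e₆}, C = span{e₇,e₈,e₉}, and let G_X be the Tanner graph of the base matrix H_X: the simple bipartite graph whose vertex set is the disjoint union of the 512 points of V and the 192 affine cosets of A, B, and C, with a point adjacent to a coset exactly when the point lies in the coset. Then the girth of G_X is exactly 8. The same statement holds for the Tanner graph G_Z built from the affine cosets of D₁ = span{e₁,e₄,e₇}, D₂ = span{e₂,e₅,e₈}, D₃ = span{e₃,e₆,e₉}. -/
import Mathlib


open scoped Classical

/-- `V = 𝔽₂⁹`. -/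
abbrev V : Type := Fin 9 → ZMod 2

/-- The standard basis vectors `e₁, …, e₉` (zero-indexed as `e 0, …, e 8`). -/
def e (i : Fin 9) : V := Pi.single i 1

/-- The family `A, B, C`: `Xfam 0 = A = span{e₁,e₂,e₃}`, `Xfam 1 = B`, `Xfam 2 = C`. -/
def Xfam (i : Fin 3) : Submodule (ZMod 2) V :=
  Submodule.span (ZMod 2)
    {e ⟨3 * i.val, by have := i.isLt; omega⟩,
     e ⟨3 * i.val + 1, by have := i.isLt; omega⟩,
     e ⟨3 * i.val + 2, by have := i.isLt; omega⟩}

/-- The family `D₁, D₂, D₃`: `Zfam j = span{e_j, e_{j+3}, e_{j+6}}` (zero-indexed). -/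
def Zfam (j : Fin 3) : Submodule (ZMod 2) V :=
  Submodule.span (ZMod 2)
    {e ⟨j.val, by have := j.isLt; omega⟩,
     e ⟨j.val + 3, by have := j.isLt; omega⟩,
     e ⟨j.val + 6, by have := j.isLt; omega⟩}

/-- Row index of `H_X`: a family index `i` together with an affine coset of `Xfam i`,
encoded as an element of the quotient `V ⧸ Xfam i`. -/
abbrev RX : Type := (i : Fin 3) × (V ⧸ Xfam i)

/-- Row index of `H_Z`. -/
abbrev RZ : Type := (j : Fin 3) × (V ⧸ Zfam j)

/-- The base matrix `H_X`: the row indexed by a coset is its incidence vector. -/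
noncomputable def HX : Matrix RX V (ZMod 2) := fun r x =>
  if (Submodule.Quotient.mk x : V ⧸ Xfam r.1) = r.2 then 1 else 0

/-- The base matrix `H_Z`. -/
noncomputable def HZ : Matrix RZ V (ZMod 2) := fun s x =>
  if (Submodule.Quotient.mk x : V ⧸ Zfam s.1) = s.2 then 1 else 0
/-- The Tanner graph of `H_X`: the simple bipartite graph on the 512 points of `V`
(variable nodes) and the 192 affine cosets of `A, B, C` (check nodes), with a point
adjacent to a coset exactly when the point lies in the coset. -/
noncomputable def GX : SimpleGraph (V ⊕ RX) :=
  SimpleGraph.fromRel (fun a b =>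
    match a, b with
    | Sum.inl x, Sum.inr r => (Submodule.Quotient.mk x : V ⧸ Xfam r.1) = r.2
    | _, _ => False)

/-- The Tanner graph of `H_Z`. -/
noncomputable def GZ : SimpleGraph (V ⊕ RZ) :=
  SimpleGraph.fromRel (fun a b =>
    match a, b with
    | Sum.inl x, Sum.inr s => (Submodule.Quotient.mk x : V ⧸ Zfam s.1) = s.2
    | _, _ => False)

-- general block submodule
def blockSub (cl : Fin 9 → Fin 3) (i : Fin 3) : Submodule (ZMod 2) V where
  carrier := {v | ∀ k, cl k ≠ i → v k = 0}
  add_mem' := by intro a b ha hb k hk; simp [ha k hk, hb k hk]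
  zero_mem' := by intro k hk; rfl
  smul_mem' := by intro c a ha k hk; simp [ha k hk]

lemma span_eq_block (i : Fin 3) (cl : Fin 9 → Fin 3) (a b c : Fin 9)
    (hab : a ≠ b) (hac : a ≠ c) (hbc : b ≠ c)
    (hset : ∀ k, cl k = i ↔ k = a ∨ k = b ∨ k = c) :
    Submodule.span (ZMod 2) {e a, e b, e c} = blockSub cl i := by
  apply le_antisymm
  · rw [Submodule.span_le]
    intro v hv k hk
    simp only [Set.mem_insert_iff, Set.mem_singleton_iff] at hv
    have hk' : ¬(k = a ∨ k = b ∨ k = c) := fun h => hk ((hset k).2 h)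
    push_neg at hk'
    rcases hv with rfl | rfl | rfl <;>
      simp [e, Pi.single_apply, hk'.1, hk'.2.1, hk'.2.2]
  · intro v hv
    have hv' : ∀ k, cl k ≠ i → v k = 0 := hv
    have : v = v a • e a + v b • e b + v c • e c := by
      funext k
      by_cases hk : cl k = i
      · rcases (hset k).1 hk with rfl | rfl | rfl <;>
          simp [e, Pi.single_apply, hab, hac, hbc, hab.symm, hac.symm, hbc.symm]
      · have := hv' k hk
        have h' : ¬(k = a ∨ k = b ∨ k = c) := fun h => hk ((hset k).2 h)
        push_neg at h'
        simp [e, Pi.single_apply, h'.1, h'.2.1, h'.2.2, this]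
    rw [this]
    refine Submodule.add_mem _ (Submodule.add_mem _ ?_ ?_) ?_ <;>
      exact Submodule.smul_mem _ _ (Submodule.subset_span (by simp))

lemma block_disjoint (cl : Fin 9 → Fin 3) {i j : Fin 3} (hij : i ≠ j) {v : V}
    (hi : v ∈ blockSub cl i) (hj : v ∈ blockSub cl j) : v = 0 := by
  funext k
  by_cases h : cl k = i
  · exact hj k (h ▸ hij)
  · exact hi k h

lemma block_triple (cl : Fin 9 → Fin 3) {i j k : Fin 3} (hij : i ≠ j) (hik : i ≠ k)
    {a b c : V} (ha : a ∈ blockSub cl i) (hb : b ∈ blockSub cl j) (hc : c ∈ blockSub cl k)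
    (habc : a + b + c = 0) : a = 0 := by
  funext m
  by_cases h : cl m = i
  · have hbm : b m = 0 := hb m (h ▸ hij)
    have hcm : c m = 0 := hc m (h ▸ hik)
    have : a m + b m + c m = 0 := by
      have := congrFun habc m; simpa using this
    simpa [hbm, hcm] using this
  · exact ha m h

variable (fam : Fin 3 → Submodule (ZMod 2) V)

abbrev Rfam := (i : Fin 3) × (V ⧸ fam i)

noncomputable def TG : SimpleGraph (V ⊕ Rfam fam) :=
  SimpleGraph.fromRel (fun a b =>
    match a, b with
    | Sum.inl x, Sum.inr r => (Submodule.Quotient.mk x : V ⧸ fam r.1) = r.2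
    | _, _ => False)

lemma tg_adj_lr (x : V) (r : Rfam fam) :
    (TG fam).Adj (Sum.inl x) (Sum.inr r) ↔ (Submodule.Quotient.mk x : V ⧸ fam r.1) = r.2 := by
  simp [TG, SimpleGraph.fromRel_adj]

lemma tg_not_adj_ll (x y : V) : ¬ (TG fam).Adj (Sum.inl x) (Sum.inl y) := by
  simp [TG, SimpleGraph.fromRel_adj]

lemma tg_not_adj_rr (r s : Rfam fam) : ¬ (TG fam).Adj (Sum.inr r) (Sum.inr s) := by
  simp [TG, SimpleGraph.fromRel_adj]

def par : V ⊕ Rfam fam → ZMod 2 := Sum.elim (fun _ => 0) (fun _ => 1)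

lemma adj_par {u v : V ⊕ Rfam fam} (h : (TG fam).Adj u v) : par fam u + par fam v = 1 := by
  rcases u with x | r <;> rcases v with y | s
  · exact absurd h (tg_not_adj_ll fam x y)
  · simp [par]
  · simp [par]
  · exact absurd h (tg_not_adj_rr fam r s)

lemma walk_par {u v : V ⊕ Rfam fam} (w : (TG fam).Walk u v) :
    (w.length : ZMod 2) = par fam u + par fam v := by
  induction w with
  | nil => simp [CharTwo.add_self_eq_zero]
  | cons h p ih =>
    rename_i a b c
    have hab := adj_par fam h
    simp only [SimpleGraph.Walk.length_cons, Nat.cast_add, Nat.cast_one, ih]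
    have h2 : par fam b + par fam b = 0 := CharTwo.add_self_eq_zero _
    linear_combination h2 - hab

open Submodule.Quotient in
lemma core4 {cl : Fin 9 → Fin 3} (hfam : ∀ i, fam i = blockSub cl i)
    {x y : V} {r s : Rfam fam} (hrs : r ≠ s) (hxy : x ≠ y)
    (hxr : (mk x : V ⧸ fam r.1) = r.2) (hyr : (mk y : V ⧸ fam r.1) = r.2)
    (hxs : (mk x : V ⧸ fam s.1) = s.2) (hys : (mk y : V ⧸ fam s.1) = s.2) : False := by
  obtain ⟨i, q⟩ := r
  obtain ⟨j, q'⟩ := s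
  have h1 : x - y ∈ fam i := (Submodule.Quotient.eq _).1 (hxr.trans hyr.symm)
  have h2 : x - y ∈ fam j := (Submodule.Quotient.eq _).1 (hxs.trans hys.symm)
  rcases eq_or_ne i j with rfl | hij
  · exact hrs (by simp only [Sigma.mk.inj_iff, heq_eq_eq]; exact ⟨trivial, hxr.symm.trans hxs⟩)
  · have : x - y = 0 := block_disjoint cl hij (hfam i ▸ h1) (hfam j ▸ h2)
    exact hxy (by linear_combination this)

open Submodule.Quotient in
lemma core6 {cl : Fin 9 → Fin 3} (hfam : ∀ i, fam i = blockSub cl i)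
    {x y z : V} {r s t : Rfam fam} (hrs : r ≠ s) (hst : s ≠ t) (hrt : r ≠ t) (hxy : x ≠ y)
    (hxr : (mk x : V ⧸ fam r.1) = r.2) (hyr : (mk y : V ⧸ fam r.1) = r.2)
    (hys : (mk y : V ⧸ fam s.1) = s.2) (hzs : (mk z : V ⧸ fam s.1) = s.2)
    (hzt : (mk z : V ⧸ fam t.1) = t.2) (hxt : (mk x : V ⧸ fam t.1) = t.2) : False := by
  obtain ⟨i, qi⟩ := r
  obtain ⟨j, qj⟩ := s
  obtain ⟨k, qk⟩ := t
  have h1 : x - y ∈ fam i := (Submodule.Quotient.eq _).1 (hxr.trans hyr.symm)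
  have h2 : y - z ∈ fam j := (Submodule.Quotient.eq _).1 (hys.trans hzs.symm)
  have h3 : z - x ∈ fam k := (Submodule.Quotient.eq _).1 (hzt.trans hxt.symm)
  have hij : i ≠ j := by
    rintro rfl
    exact hrs (by simp only [Sigma.mk.inj_iff, heq_eq_eq]; exact ⟨trivial, hyr.symm.trans hys⟩)
  have hjk : j ≠ k := by
    rintro rfl
    exact hst (by simp only [Sigma.mk.inj_iff, heq_eq_eq]; exact ⟨trivial, hzs.symm.trans hzt⟩)
  have hik : i ≠ k := by
    rintro rfl
    exact hrt (by simp only [Sigma.mk.inj_iff, heq_eq_eq]; exact ⟨trivial, hxr.symm.trans hxt⟩)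
  have hsum : (x - y) + (y - z) + (z - x) = 0 := by ring
  have : x - y = 0 :=
    block_triple cl hij hik (hfam i ▸ h1) (hfam j ▸ h2) (hfam k ▸ h3) hsum
  exact hxy (by linear_combination this)

lemma no_cycle4 {cl : Fin 9 → Fin 3} (hfam : ∀ i, fam i = blockSub cl i)
    (a : V ⊕ Rfam fam) (w : (TG fam).Walk a a) (hw : w.IsCycle) : w.length ≠ 4 := by
  intro hlen
  cases w with
  | nil => simp at hlen
  | cons h1 w1 =>
  rename_i b
  cases w1 with
  | nil => simp at hlen
  | cons h2 w2 =>
  rename_i c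
  cases w2 with
  | nil => simp at hlen
  | cons h3 w3 =>
  rename_i d
  cases w3 with
  | cons h4 w4 =>
    cases w4 with
    | nil =>
      clear hlen
      have hnd := ((SimpleGraph.Walk.isCycle_def _).1 hw).2.2
      simp only [SimpleGraph.Walk.support_cons, SimpleGraph.Walk.support_nil,
        List.tail_cons, List.nodup_cons, List.mem_cons, List.mem_singleton,
        List.not_mem_nil, or_false, not_or] at hnd
      obtain ⟨⟨hbc, hbd, hba⟩, ⟨hcd, hca⟩, hda, -⟩ := hnd
      rcases a with x | r
      · rcases b with _ | r
        · exact tg_not_adj_ll fam _ _ h1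
        rcases c with y | s'
        swap
        · exact tg_not_adj_rr fam _ _ h2
        rcases d with _ | s
        · exact tg_not_adj_ll fam _ _ h3
        exact core4 fam hfam (fun h => hbd (by rw [h]))
          (Ne.symm (fun h => hca (by rw [h])))
          ((tg_adj_lr fam _ _).1 h1) ((tg_adj_lr fam _ _).1 h2.symm)
          ((tg_adj_lr fam _ _).1 h4.symm) ((tg_adj_lr fam _ _).1 h3)
      · rcases b with x | r'
        swap
        · exact tg_not_adj_rr fam _ _ h1
        rcases c with _ | s
        · exact tg_not_adj_ll fam _ _ h2
        rcases d with y | t'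
        swap
        · exact tg_not_adj_rr fam _ _ h3
        exact core4 fam hfam (Ne.symm (fun h => hca (by rw [h])))
          (fun h => hbd (by rw [h]))
          ((tg_adj_lr fam _ _).1 h1.symm) ((tg_adj_lr fam _ _).1 h4)
          ((tg_adj_lr fam _ _).1 h2) ((tg_adj_lr fam _ _).1 h3.symm)
    | cons _ _ => simp at hlen
  | nil => simp at hlen

lemma no_cycle6 {cl : Fin 9 → Fin 3} (hfam : ∀ i, fam i = blockSub cl i)
    (a : V ⊕ Rfam fam) (w : (TG fam).Walk a a) (hw : w.IsCycle) : w.length ≠ 6 := by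
  intro hlen
  cases w with
  | nil => simp at hlen
  | cons h1 w1 =>
  rename_i b
  cases w1 with
  | nil => simp at hlen
  | cons h2 w2 =>
  rename_i c
  cases w2 with
  | nil => simp at hlen
  | cons h3 w3 =>
  rename_i d
  cases w3 with
  | nil => simp at hlen
  | cons h4 w4 =>
  rename_i f
  cases w4 with
  | nil => simp at hlen
  | cons h5 w5 =>
  rename_i g
  cases w5 with
  | cons h6 w6 =>
    cases w6 with
    | nil =>
      clear hlen
      have hnd := ((SimpleGraph.Walk.isCycle_def _).1 hw).2.2
      simp only [SimpleGraph.Walk.support_cons, SimpleGraph.Walk.support_nil,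
        List.tail_cons, List.nodup_cons, List.mem_cons, List.mem_singleton,
        List.not_mem_nil, or_false, not_or] at hnd
      obtain ⟨⟨hbc, hbd, hbf, hbg, hba⟩, ⟨hcd, hcf, hcg, hca⟩, ⟨hdf, hdg, hda⟩,
        ⟨hfg, hfa⟩, hga, -⟩ := hnd
      rcases a with x | r
      · rcases b with _ | r
        · exact tg_not_adj_ll fam _ _ h1
        rcases c with y | _
        swap
        · exact tg_not_adj_rr fam _ _ h2
        rcases d with _ | s
        · exact tg_not_adj_ll fam _ _ h3
        rcases f with z | _
        swap
        · exact tg_not_adj_rr fam _ _ h4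
        rcases g with _ | t
        · exact tg_not_adj_ll fam _ _ h5
        exact core6 fam hfam (fun h => hbd (by rw [h])) (fun h => hdg (by rw [h]))
          (fun h => hbg (by rw [h])) (Ne.symm (fun h => hca (by rw [h])))
          ((tg_adj_lr fam _ _).1 h1) ((tg_adj_lr fam _ _).1 h2.symm)
          ((tg_adj_lr fam _ _).1 h3) ((tg_adj_lr fam _ _).1 h4.symm)
          ((tg_adj_lr fam _ _).1 h5) ((tg_adj_lr fam _ _).1 h6.symm)
      · rcases b with x | _
        swap
        · exact tg_not_adj_rr fam _ _ h1
        rcases c with _ | s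
        · exact tg_not_adj_ll fam _ _ h2
        rcases d with y | _
        swap
        · exact tg_not_adj_rr fam _ _ h3
        rcases f with _ | t
        · exact tg_not_adj_ll fam _ _ h4
        rcases g with z | _
        swap
        · exact tg_not_adj_rr fam _ _ h5
        exact core6 fam hfam (fun h => hcf (by rw [h])) (fun h => hfa (by rw [h]))
          (fun h => hca (by rw [h])) (fun h => hbd (by rw [h]))
          ((tg_adj_lr fam _ _).1 h2) ((tg_adj_lr fam _ _).1 h3.symm)
          ((tg_adj_lr fam _ _).1 h4) ((tg_adj_lr fam _ _).1 h5.symm)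
          ((tg_adj_lr fam _ _).1 h6) ((tg_adj_lr fam _ _).1 h1.symm)
    | cons _ _ => simp at hlen
  | nil => simp at hlen

lemma tg_lower {cl : Fin 9 → Fin 3} (hfam : ∀ i, fam i = blockSub cl i)
    (a : V ⊕ Rfam fam) (w : (TG fam).Walk a a) (hw : w.IsCycle) : 8 ≤ w.length := by
  have heven : (2 : ℕ) ∣ w.length := by
    have := walk_par fam w
    rw [CharTwo.add_self_eq_zero] at this
    exact (ZMod.natCast_eq_zero_iff _ 2).1 this
  have h3 := hw.three_le_length
  have h4 := no_cycle4 fam hfam a w hw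
  have h6 := no_cycle6 fam hfam a w hw
  omega

open Submodule.Quotient in
lemma tg_upper (u v : V) (hu : u ∈ fam 0) (hv : v ∈ fam 1)
    (hu1 : u ∉ fam 1) (hv0 : v ∉ fam 0) (hu0 : u ≠ 0) (hvz : v ≠ 0) :
    ∃ (a : V ⊕ Rfam fam) (w : (TG fam).Walk a a), w.IsCycle ∧ w.length = 8 := by
  set v0 : V ⊕ Rfam fam := Sum.inl 0 with hv0def
  set v1 : V ⊕ Rfam fam := Sum.inr ⟨0, mk 0⟩ with hv1def
  set v2 : V ⊕ Rfam fam := Sum.inl u with hv2def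
  set v3 : V ⊕ Rfam fam := Sum.inr ⟨1, mk u⟩ with hv3def
  set v4 : V ⊕ Rfam fam := Sum.inl (u + v) with hv4def
  set v5 : V ⊕ Rfam fam := Sum.inr ⟨0, mk v⟩ with hv5def
  set v6 : V ⊕ Rfam fam := Sum.inl v with hv6def
  set v7 : V ⊕ Rfam fam := Sum.inr ⟨1, mk 0⟩ with hv7def
  have a01 : (TG fam).Adj v0 v1 := (tg_adj_lr fam _ _).2 rfl
  have a12 : (TG fam).Adj v1 v2 :=
    ((tg_adj_lr fam _ _).2 ((Submodule.Quotient.eq _).2 (by simpa using hu))).symm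
  have a23 : (TG fam).Adj v2 v3 := (tg_adj_lr fam _ _).2 rfl
  have a34 : (TG fam).Adj v3 v4 :=
    ((tg_adj_lr fam _ _).2 ((Submodule.Quotient.eq _).2 (by simpa using hv))).symm
  have a45 : (TG fam).Adj v4 v5 :=
    (tg_adj_lr fam _ _).2 ((Submodule.Quotient.eq _).2 (by simpa using hu))
  have a56 : (TG fam).Adj v5 v6 := ((tg_adj_lr fam _ _).2 rfl).symm
  have a67 : (TG fam).Adj v6 v7 :=
    (tg_adj_lr fam _ _).2 ((Submodule.Quotient.eq _).2 (by simpa using hv))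
  have a70 : (TG fam).Adj v7 v0 := ((tg_adj_lr fam _ _).2 rfl).symm
  have huv : u ≠ v := fun h => hu1 (h ▸ hv)
  have huv0 : u + v ≠ 0 := fun h => huv (by have : u = -v := eq_neg_of_add_eq_zero_left h; rwa [CharTwo.neg_eq] at this)
  have hu_uv : u ≠ u + v := fun h => hvz (by linear_combination -h)
  have hv_uv : v ≠ u + v := fun h => hu0 (by linear_combination -h)
  have hq1 : (mk v : V ⧸ fam 0) ≠ mk 0 := by
    rw [Ne, Submodule.Quotient.eq]; simpa using hv0
  have hq2 : (mk u : V ⧸ fam 1) ≠ mk 0 := by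
    rw [Ne, Submodule.Quotient.eq]; simpa using hu1
  have n0u : (0:V) ≠ u := Ne.symm hu0
  have n0uv : (0:V) ≠ u + v := Ne.symm huv0
  have n0v : (0:V) ≠ v := Ne.symm hvz
  have nvu : v ≠ u := Ne.symm huv
  have huvu : u + v ≠ u := Ne.symm hu_uv
  have huvv : u + v ≠ v := Ne.symm hv_uv
  have hq1' := Ne.symm hq1
  have hq2' := Ne.symm hq2
  have f01 : (0:Fin 3) ≠ 1 := by decide
  have f10 : (1:Fin 3) ≠ 0 := by decide
  refine ⟨v0, SimpleGraph.Walk.cons a01 (SimpleGraph.Walk.cons a12 (SimpleGraph.Walk.cons a23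
    (SimpleGraph.Walk.cons a34 (SimpleGraph.Walk.cons a45 (SimpleGraph.Walk.cons a56
    (SimpleGraph.Walk.cons a67 (SimpleGraph.Walk.cons a70 SimpleGraph.Walk.nil))))))), ?_, by simp⟩
  rw [SimpleGraph.Walk.isCycle_def]
  refine ⟨?_, by simp, ?_⟩
  · rw [SimpleGraph.Walk.isTrail_def]
    simp only [SimpleGraph.Walk.edges_cons, SimpleGraph.Walk.edges_nil, List.nodup_cons,
      List.mem_cons, List.not_mem_nil, or_false, not_or, List.nodup_nil, and_true]
    simp [hv0def, hv1def, hv2def, hv3def, hv4def, hv5def, hv6def, hv7def,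
      Sym2.eq_iff, Sigma.mk.inj_iff, hu0, hvz, huv, hu_uv, hv_uv, huv0, n0u, n0uv, n0v,
      nvu, huvu, huvv, hq1, hq2, hq1', hq2', f01, f10]
  · simp only [SimpleGraph.Walk.support_cons, SimpleGraph.Walk.support_nil, List.tail_cons,
      List.nodup_cons, List.mem_cons, List.not_mem_nil, or_false, not_or, List.nodup_nil,
      and_true, List.mem_singleton]
    simp [hv0def, hv1def, hv2def, hv3def, hv4def, hv5def, hv6def, hv7def,
      Sym2.eq_iff, Sigma.mk.inj_iff, hu0, hvz, huv, hu_uv, hv_uv, huv0, n0u, n0uv, n0v,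
      nvu, huvu, huvv, hq1, hq2, hq1', hq2', f01, f10]
    exact ⟨fun h => hq1' (by simpa using h), hu1⟩

lemma e_mem_block (cl : Fin 9 → Fin 3) (k0 : Fin 9) (i : Fin 3) (h : cl k0 = i) :
    e k0 ∈ blockSub cl i := by
  intro k hk
  have hkk : k ≠ k0 := by rintro rfl; exact hk h
  exact Pi.single_eq_of_ne hkk 1

lemma e_notMem_block (cl : Fin 9 → Fin 3) (k0 : Fin 9) (i : Fin 3) (h : cl k0 ≠ i) :
    e k0 ∉ blockSub cl i := by
  intro hm
  have := hm k0 h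
  simp [e] at this

lemma e_ne_zero (k0 : Fin 9) : e k0 ≠ 0 := by
  intro h
  have := congrFun h k0
  simp [e] at this

lemma tg_girth {cl : Fin 9 → Fin 3} (hfam : ∀ i, fam i = blockSub cl i)
    (u v : V) (hu : u ∈ fam 0) (hv : v ∈ fam 1)
    (hu1 : u ∉ fam 1) (hv0 : v ∉ fam 0) (hu0 : u ≠ 0) (hvz : v ≠ 0) :
    (TG fam).girth = 8 := by
  have hup : (TG fam).egirth ≤ 8 := by
    obtain ⟨a, w, hc, hlen⟩ := tg_upper fam u v hu hv hu1 hv0 hu0 hvz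
    calc (TG fam).egirth ≤ (w.length : ℕ∞) := by
          rw [SimpleGraph.egirth]
          refine iInf₂_le_of_le a w ?_
          exact iInf_le_of_le hc le_rfl
      _ = 8 := by rw [hlen]; rfl
  have hlow : (8 : ℕ∞) ≤ (TG fam).egirth := by
    rw [SimpleGraph.le_egirth]
    intro a w hw
    exact_mod_cast Nat.cast_le.2 (tg_lower fam hfam a w hw)
  have : (TG fam).egirth = 8 := le_antisymm hup hlow
  rw [SimpleGraph.girth, this]
  rfl


def clX : Fin 9 → Fin 3 := fun k => ⟨k.val / 3, by omega⟩
def clZ : Fin 9 → Fin 3 := fun k => ⟨k.val % 3, by omega⟩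

lemma hfamX : ∀ i, Xfam i = blockSub clX i := by
  intro i
  unfold Xfam
  refine span_eq_block i clX _ _ _ ?_ ?_ ?_ ?_
  · simp only [ne_eq, Fin.mk.injEq]; omega
  · simp only [ne_eq, Fin.mk.injEq]; omega
  · simp only [ne_eq, Fin.mk.injEq]; omega
  · intro k
    have hk := k.isLt
    have hi := i.isLt
    simp only [clX, Fin.ext_iff, Fin.mk.injEq]
    omega

lemma hfamZ : ∀ j, Zfam j = blockSub clZ j := by
  intro j
  unfold Zfam
  refine span_eq_block j clZ _ _ _ ?_ ?_ ?_ ?_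
  · simp only [ne_eq, Fin.mk.injEq]; omega
  · simp only [ne_eq, Fin.mk.injEq]; omega
  · simp only [ne_eq, Fin.mk.injEq]; omega
  · intro k
    have hk := k.isLt
    have hj := j.isLt
    simp only [clZ, Fin.ext_iff, Fin.mk.injEq]
    omega

lemma GX_eq : GX = TG Xfam := by
  unfold GX TG
  congr 1
  funext a b
  rcases a with x | r <;> rcases b with y | s <;> rfl

lemma GZ_eq : GZ = TG Zfam := by
  unfold GZ TG
  congr 1
  funext a b
  rcases a with x | r <;> rcases b with y | s <;> rfl

theorem stmt9 : GX.girth = 8 ∧ GZ.girth = 8 := by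
  constructor
  · rw [GX_eq]
    exact tg_girth Xfam hfamX (e ⟨0, by omega⟩) (e ⟨3, by omega⟩)
      ((hfamX 0) ▸ e_mem_block clX _ _ (by decide))
      ((hfamX 1) ▸ e_mem_block clX _ _ (by decide))
      ((hfamX 1) ▸ e_notMem_block clX _ _ (by decide))
      ((hfamX 0) ▸ e_notMem_block clX _ _ (by decide))
      (e_ne_zero _) (e_ne_zero _)
  · rw [GZ_eq]
    exact tg_girth Zfam hfamZ (e ⟨0, by omega⟩) (e ⟨1, by omega⟩)
      ((hfamZ 0) ▸ e_mem_block clZ _ _ (by decide))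
      ((hfamZ 1) ▸ e_mem_block clZ _ _ (by decide))
      ((hfamZ 1) ▸ e_notMem_block clZ _ _ (by decide))
      ((hfamZ 0) ▸ e_notMem_block clZ _ _ (by decide))
      (e_ne_zero _) (e_ne_zero _)
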